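/- arXiv:2111.02698 — 4 statements merged into one kernel-verified Lean document; each statement's English description precedes it below -/
import Mathlib

section
/- If A is an N×N lower Hessenberg-type (p+2)-banded matrix (entries a_{i,j} = 0 when j > i+1 or i > j+p) with all subdiagonal band entries a_{i+p,i} ≠ 0 for i = 0,…,N-p-1, and A admits a factorization A = L·U with L unit lower triangular and U upper triangular with nonzero diagonal, then L is (p+1)-banded (l_{i,j} = 0 for i > j+p) and U is upper bidiagonal (u_{i,j} = 0 for j > i+1 and j < i). -/
/-- If `A` is an `N×N` lower Hessenberg-type `(p+2)`-banded matrix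
(`A i j = 0` when `j > i+1` or `i > j+p`) with all subdiagonal band entries
`a_{i+p,i} ≠ 0`, and `A = L * U` with `L` unit lower triangular and `U` upper
triangular with nonzero diagonal, then `L` is `(p+1)`-banded and `U` is upper
bidiagonal. -/
theorem stmt0 {F : Type*} [Field F] {N p : ℕ}
    (A L U : Matrix (Fin N) (Fin N) F)
    (hHess : ∀ i j : Fin N, (j : ℕ) > (i : ℕ) + 1 → A i j = 0)
    (hBand : ∀ i j : Fin N, (i : ℕ) > (j : ℕ) + p → A i j = 0)
    (hSub : ∀ i j : Fin N, (i : ℕ) = (j : ℕ) + p → A i j ≠ 0)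
    (hLU : A = L * U)
    (hLdiag : ∀ i : Fin N, L i i = 1)
    (hLlow : ∀ i j : Fin N, (j : ℕ) > (i : ℕ) → L i j = 0)
    (hUup : ∀ i j : Fin N, (i : ℕ) > (j : ℕ) → U i j = 0)
    (hUdiag : ∀ i : Fin N, U i i ≠ 0) :
    (∀ i j : Fin N, (i : ℕ) > (j : ℕ) + p → L i j = 0) ∧
    (∀ i j : Fin N, (j : ℕ) > (i : ℕ) + 1 → U i j = 0) := by
  constructor
  · intro i j hij
    have key : ∀ n : ℕ, ∀ i j : Fin N, (j : ℕ) = n → (i : ℕ) > (j : ℕ) + p →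
        L i j = 0 := by
      intro n
      induction n using Nat.strong_induction_on with
      | _ n ih =>
        intro i j hj hgt
        have hA : A i j = 0 := hBand i j hgt
        rw [hLU, Matrix.mul_apply] at hA
        have hsum : ∑ k, L i k * U k j = L i j * U j j := by
          rw [Finset.sum_eq_single j]
          · intro k _ hk
            rcases lt_or_gt_of_ne (Fin.val_ne_of_ne hk) with h | h
            · rw [ih k (hj ▸ h) i k rfl (by omega), zero_mul]
            · rw [hUup k j h, mul_zero]
          · intro h; exact absurd (Finset.mem_univ j) h
        rw [hsum] at hA
        exact (mul_eq_zero.mp hA).resolve_right (hUdiag j)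
    exact key j i j rfl hij
  · intro i j hij
    have key : ∀ n : ℕ, ∀ i j : Fin N, (i : ℕ) = n → (j : ℕ) > (i : ℕ) + 1 →
        U i j = 0 := by
      intro n
      induction n using Nat.strong_induction_on with
      | _ n ih =>
        intro i j hi hgt
        have hA : A i j = 0 := hHess i j hgt
        rw [hLU, Matrix.mul_apply] at hA
        have hsum : ∑ k, L i k * U k j = L i i * U i j := by
          rw [Finset.sum_eq_single i]
          · intro k _ hk
            rcases lt_or_gt_of_ne (Fin.val_ne_of_ne hk) with h | h
            · rw [ih k (hi ▸ h) k j rfl (by omega), mul_zero]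
            · rw [hLlow i k h, zero_mul]
          · intro h; exact absurd (Finset.mem_univ i) h
        rw [hsum, hLdiag i, one_mul] at hA
        exact hA
    exact key i i j rfl hij
end

section
/- If moreover each of the p lower unit bidiagonal matrices L^{(i)} has all its subdiagonal entries nonzero, then the product L = L^{(1)}⋯L^{(p)} satisfies l_{i+p,i} ≠ 0 for all valid i; in fact l_{m,m-p} equals the product γ^{(1)}_{m-1}·γ^{(2)}_{m-2}⋯γ^{(p)}_{m-p} of one subdiagonal entry from each factor. -/
theorem aux0 {F : Type*} [Field F] {N : ℕ} :
    ∀ (p : ℕ) (L : Fin p → Matrix (Fin N) (Fin N) F),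
      (∀ (k : Fin p) (i j : Fin N), (j : ℕ) + 1 < i → L k i j = 0) →
      ∀ i j : Fin N, (j : ℕ) + p < (i : ℕ) → (List.ofFn L).prod i j = 0 := by
  intro p
  induction p with
  | zero =>
    intro L hL i j hij
    simp only [List.ofFn_zero, List.prod_nil]
    exact Matrix.one_apply_ne (by intro h; subst h; omega)
  | succ p ih =>
    intro L hL i j hij
    rw [List.ofFn_succ, List.prod_cons, Matrix.mul_apply]
    apply Finset.sum_eq_zero
    intro k _
    by_cases hk : (k : ℕ) + 1 < (i : ℕ)
    · rw [hL 0 i k hk, zero_mul]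
    · rw [ih _ (fun m => hL m.succ) k j (by omega), mul_zero]

theorem aux1 {F : Type*} [Field F] {N : ℕ} :
    ∀ (p : ℕ) (γ : Fin p → ℕ → F) (L : Fin p → Matrix (Fin N) (Fin N) F),
      (∀ (k : Fin p) (i j : Fin N), L k i j =
        if (i : ℕ) = (j : ℕ) then 1
        else if (i : ℕ) = (j : ℕ) + 1 then γ k (j : ℕ) else 0) →
      ∀ i j : Fin N, (i : ℕ) = (j : ℕ) + p →
        (List.ofFn L).prod i j = ∏ k : Fin p, γ k ((i : ℕ) - ((k : ℕ) + 1)) := by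
  intro p
  induction p with
  | zero =>
    intro γ L hL i j hij
    have : i = j := Fin.ext (by omega)
    subst this
    simp [Matrix.one_apply_eq]
  | succ p ih =>
    intro γ L hL i j hij
    have hzero : ∀ (k : Fin (p+1)) (a b : Fin N), (b : ℕ) + 1 < a → L k a b = 0 := by
      intro k a b hab
      rw [hL]
      rw [if_neg (by omega), if_neg (by omega)]
    have hi1 : (i : ℕ) - 1 < N := by omega
    set i' : Fin N := ⟨(i : ℕ) - 1, hi1⟩ with hi'
    rw [List.ofFn_succ, List.prod_cons, Matrix.mul_apply]
    rw [Finset.sum_eq_single i']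
    · have hLval : L 0 i i' = γ 0 ((i : ℕ) - 1) := by
        rw [hL]
        rw [if_neg (by simp [hi']; omega), if_pos (by simp [hi']; omega)]
      have hrest : (List.ofFn fun m => L m.succ).prod i' j
          = ∏ k : Fin p, γ k.succ ((i' : ℕ) - ((k : ℕ) + 1)) :=
        ih _ _ (fun m => hL m.succ) i' j (by simp [hi']; omega)
      rw [hLval, hrest, Fin.prod_univ_succ]
      congr 1
      apply Finset.prod_congr rfl
      intro k _
      congr 1
      simp [hi', Fin.val_succ]
      omega
    · intro k _ hk
      by_cases h1 : (i : ℕ) = (k : ℕ)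
      · rw [aux0 p _ (fun m => hzero m.succ) k j (by omega), mul_zero]
      · by_cases h2 : (i : ℕ) = (k : ℕ) + 1
        · have : k = i' := by
            apply Fin.ext
            show (k : ℕ) = (i : ℕ) - 1
            omega
          exact absurd this hk
        · rw [hL, if_neg h1, if_neg h2, zero_mul]
    · intro h
      exact absurd (Finset.mem_univ i') h


/-- If each of the `p` lower unit bidiagonal matrices `L⁽ⁱ⁾` (with
subdiagonal entries `γ⁽ⁱ⁾ₖ` at position `(k+1,k)`) has all its subdiagonal
entries nonzero, then the product `L = L⁽¹⁾⋯L⁽ᵖ⁾` satisfies `l_{i+p,i} ≠ 0`;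
in fact `l_{m,m-p} = γ⁽¹⁾_{m-1}·γ⁽²⁾_{m-2}⋯γ⁽ᵖ⁾_{m-p}`. -/
theorem stmt3 {F : Type*} [Field F] {N p : ℕ}
    (γ : Fin p → ℕ → F)
    (hγ : ∀ (k : Fin p) (n : ℕ), γ k n ≠ 0)
    (L : Fin p → Matrix (Fin N) (Fin N) F)
    (hL : ∀ (k : Fin p) (i j : Fin N), L k i j =
      if (i : ℕ) = (j : ℕ) then 1
      else if (i : ℕ) = (j : ℕ) + 1 then γ k (j : ℕ) else 0) :
    ∀ i j : Fin N, (i : ℕ) = (j : ℕ) + p →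
      ((List.ofFn L).prod i j = ∏ k : Fin p, γ k ((i : ℕ) - ((k : ℕ) + 1)) ∧
       (List.ofFn L).prod i j ≠ 0) := by
  intro i j hij
  have h := aux1 p γ L hL i j hij
  refine ⟨h, ?_⟩
  rw [h]
  exact Finset.prod_ne_zero_iff.mpr (fun k _ => hγ k _)
end

section
/- For a product L = L^{(1)}⋯L^{(p)} of N×N lower unit bidiagonal matrices with subdiagonal entries γ^{(i)}_k of L^{(i)} at position (k+1,k), the entries of L are given by l_{m,m-k} = Σ_{1 ≤ σ₁ < σ₂ < ⋯ < σ_k ≤ p} Π_{j=1}^{k} γ^{(σ_j)}_{m-j}, for k = 1,…,p. -/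
lemma lowtri {R : Type*} [CommRing R] {N : ℕ}
    (l : List (Matrix (Fin N) (Fin N) R))
    (h : ∀ M ∈ l, ∀ i j : Fin N, (i : ℕ) < j → M i j = 0) :
    ∀ i j : Fin N, (i : ℕ) < j → l.prod i j = 0 := by
  induction l with
  | nil => intro i j hij; rw [List.prod_nil, Matrix.one_apply_ne (fun e => absurd (congrArg Fin.val e) hij.ne)]
  | cons M t ih =>
    intro i j hij
    rw [List.prod_cons, Matrix.mul_apply]
    apply Finset.sum_eq_zero
    intro m _
    rcases lt_or_ge (i : ℕ) (m : ℕ) with hm | hm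
    · rw [h M (List.mem_cons_self (a := M) (l := t)) i m hm, zero_mul]
    · rw [ih (fun M hM => h M (List.mem_cons_of_mem _ hM)) m j (lt_of_le_of_lt hm hij), mul_zero]

lemma key {R : Type*} [CommRing R] {N : ℕ} :
    ∀ (p : ℕ) (γ : Fin p → ℕ → R) (L : Fin p → Matrix (Fin N) (Fin N) R),
    (∀ (k : Fin p) (i j : Fin N), L k i j =
      if (i : ℕ) = (j : ℕ) then 1
      else if (i : ℕ) = (j : ℕ) + 1 then γ k (j : ℕ) else 0) →
    ∀ (k : ℕ) (i j : Fin N), (i : ℕ) = (j : ℕ) + k →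
      (List.ofFn L).prod i j =
        ∑ σ ∈ Finset.univ.filter
            (fun σ : Fin k → Fin p => ∀ a b : Fin k, a < b → σ a < σ b),
          ∏ jj : Fin k, γ (σ jj) ((i : ℕ) - ((jj : ℕ) + 1)) := by
  intro p
  induction p with
  | zero =>
    intro γ L hL k i j hij
    rw [List.ofFn_zero, List.prod_nil]
    cases k with
    | zero =>
      have hij' : i = j := Fin.ext (by omega)
      subst hij'
      rw [Matrix.one_apply_eq]
      rw [Finset.filter_true_of_mem (fun σ _ => fun a b hab => absurd hab (by exact a.elim0))]
      simp
    | succ k =>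
      have : IsEmpty (Fin (k + 1) → Fin 0) := ⟨fun f => (f 0).elim0⟩
      rw [Matrix.one_apply_ne (fun e => by have := congrArg Fin.val e; omega)]
      rw [Finset.univ_eq_empty, Finset.filter_empty, Finset.sum_empty]
  | succ p ih =>
    intro γ L hL k i j hij
    set P := (List.ofFn fun q : Fin p => L q.castSucc).prod with hPdef
    have hsplit : (List.ofFn L).prod = P * L (Fin.last p) := by
      rw [List.ofFn_succ', List.concat_eq_append, List.prod_append, List.prod_cons,
        List.prod_nil, mul_one]
    have hPlow : ∀ a b : Fin N, (a : ℕ) < b → P a b = 0 := by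
      apply lowtri
      intro M hM a b hab
      obtain ⟨q, rfl⟩ := (List.mem_ofFn.mp hM)
      show L q.castSucc a b = 0
      rw [hL]
      rw [if_neg (by omega), if_neg (by omega)]
    have ihP : ∀ (k : ℕ) (a b : Fin N), (a : ℕ) = (b : ℕ) + k →
        P a b = ∑ σ ∈ Finset.univ.filter
            (fun σ : Fin k → Fin p => ∀ a b : Fin k, a < b → σ a < σ b),
          ∏ jj : Fin k, γ (Fin.castSucc (σ jj)) ((a : ℕ) - ((jj : ℕ) + 1)) :=
      ih (fun q => γ q.castSucc) (fun q => L q.castSucc) (fun q a b => hL q.castSucc a b)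
    rw [hsplit, Matrix.mul_apply]
    have hterm : ∀ m : Fin N, P i m * L (Fin.last p) m j =
        (if m = j then P i j else 0) +
        (if (m : ℕ) = (j : ℕ) + 1 then P i m * γ (Fin.last p) j else 0) := by
      intro m
      rw [hL]
      by_cases h1 : (m : ℕ) = (j : ℕ)
      · have hm : m = j := Fin.ext h1
        subst hm
        rw [if_pos h1, if_pos rfl, mul_one, if_neg (by omega), add_zero]
      · rw [if_neg h1, if_neg (fun e => h1 (congrArg Fin.val e)), zero_add]
        by_cases h2 : (m : ℕ) = (j : ℕ) + 1
        · rw [if_pos h2, if_pos h2]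
        · rw [if_neg h2, if_neg h2, mul_zero]
    rw [Finset.sum_congr rfl (fun m _ => hterm m), Finset.sum_add_distrib,
      Finset.sum_ite_eq' Finset.univ j, if_pos (Finset.mem_univ j)]
    cases k with
    | zero =>
      have hij' : i = j := Fin.ext (by omega)
      have h2 : (∑ m : Fin N, if (m : ℕ) = (j : ℕ) + 1
          then P i m * γ (Fin.last p) j else 0) = 0 := by
        apply Finset.sum_eq_zero
        intro m _
        split_ifs with h
        · rw [hPlow i m (by omega), zero_mul]
        · rfl
      rw [h2, add_zero, ihP 0 i j hij]
      rw [Finset.filter_true_of_mem (fun σ _ => fun a b hab => a.elim0),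
        Finset.filter_true_of_mem (fun σ _ => fun a b hab => a.elim0)]
      simp
    | succ k' =>
      have hj1 : (j : ℕ) + 1 < N := by have := i.isLt; omega
      set j1 : Fin N := ⟨(j : ℕ) + 1, hj1⟩ with hj1def
      have h2 : (∑ m : Fin N, if (m : ℕ) = (j : ℕ) + 1
          then P i m * γ (Fin.last p) j else 0) = P i j1 * γ (Fin.last p) j := by
        rw [Finset.sum_eq_single j1]
        · rw [if_pos rfl]
        · intro b _ hb
          rw [if_neg (fun e => hb (Fin.ext e))]
        · intro h; exact absurd (Finset.mem_univ j1) h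
      rw [h2, ihP (k' + 1) i j hij, ihP k' i j1 (by simp [hj1def]; omega)]
      rw [← Finset.sum_filter_add_sum_filter_not
        (Finset.univ.filter (fun σ : Fin (k' + 1) → Fin (p + 1) =>
          ∀ a b : Fin (k' + 1), a < b → σ a < σ b))
        (fun σ => σ (Fin.last k') = Fin.last p)]
      have hle : ∀ (σ : Fin (k' + 1) → Fin (p + 1)),
          (∀ a b : Fin (k' + 1), a < b → σ a < σ b) →
          ∀ a, σ a ≤ σ (Fin.last k') := by
        intro σ hm a
        rcases eq_or_lt_of_le (Fin.le_last a) with h | h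
        · rw [h]
        · exact (hm a _ h).le
      have hS2 : (∑ σ ∈ (Finset.univ.filter (fun σ : Fin (k' + 1) → Fin (p + 1) =>
            ∀ a b : Fin (k' + 1), a < b → σ a < σ b)).filter
            (fun σ => ¬ σ (Fin.last k') = Fin.last p),
          ∏ jj : Fin (k' + 1), γ (σ jj) ((i : ℕ) - ((jj : ℕ) + 1))) =
          ∑ σ ∈ Finset.univ.filter
            (fun σ : Fin (k' + 1) → Fin p => ∀ a b : Fin (k' + 1), a < b → σ a < σ b),
          ∏ jj : Fin (k' + 1), γ (Fin.castSucc (σ jj)) ((i : ℕ) - ((jj : ℕ) + 1)) := by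
        have hlt : ∀ (σ : Fin (k' + 1) → Fin (p + 1)),
            σ ∈ (Finset.univ.filter (fun σ : Fin (k' + 1) → Fin (p + 1) =>
              ∀ a b : Fin (k' + 1), a < b → σ a < σ b)).filter
              (fun σ => ¬ σ (Fin.last k') = Fin.last p) →
            ∀ a, (σ a : ℕ) < p := by
          intro σ hσ a
          simp only [Finset.mem_filter, Finset.mem_univ, true_and] at hσ
          have h1 := hle σ hσ.1 a
          have h2 : (σ (Fin.last k') : ℕ) ≠ p := fun e => hσ.2 (Fin.ext (by simp [e]))
          have h3 : (σ (Fin.last k') : ℕ) < p + 1 := (σ (Fin.last k')).isLt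
          have := Fin.le_iff_val_le_val.mp h1
          omega
        refine Finset.sum_bij' (fun σ hσ => fun a => (⟨(σ a : ℕ), hlt σ hσ a⟩ : Fin p))
          (fun τ _ => fun a => Fin.castSucc (τ a)) ?_ ?_ ?_ ?_ ?_
        · intro σ hσ
          simp only [Finset.mem_filter, Finset.mem_univ, true_and] at hσ ⊢
          intro a b hab
          exact Fin.lt_iff_val_lt_val.mpr (Fin.lt_iff_val_lt_val.mp (hσ.1 a b hab))
        · intro τ hτ
          simp only [Finset.mem_filter, Finset.mem_univ, true_and] at hτ ⊢
          constructor
          · exact fun a b hab => Fin.castSucc_lt_castSucc_iff.mpr (hτ a b hab)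
          · exact (Fin.castSucc_lt_last _).ne
        · intro σ hσ
          funext a
          exact Fin.ext rfl
        · intro τ hτ
          funext a
          exact Fin.ext rfl
        · intro σ hσ
          exact Finset.prod_congr rfl (fun jj _ => by congr 1)
      have hS1 : (∑ σ ∈ (Finset.univ.filter (fun σ : Fin (k' + 1) → Fin (p + 1) =>
            ∀ a b : Fin (k' + 1), a < b → σ a < σ b)).filter
            (fun σ => σ (Fin.last k') = Fin.last p),
          ∏ jj : Fin (k' + 1), γ (σ jj) ((i : ℕ) - ((jj : ℕ) + 1))) =
          (∑ σ ∈ Finset.univ.filter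
            (fun σ : Fin k' → Fin p => ∀ a b : Fin k', a < b → σ a < σ b),
          ∏ jj : Fin k', γ (Fin.castSucc (σ jj)) ((i : ℕ) - ((jj : ℕ) + 1))) *
          γ (Fin.last p) j := by
        have step1 : ∀ σ ∈ (Finset.univ.filter (fun σ : Fin (k' + 1) → Fin (p + 1) =>
            ∀ a b : Fin (k' + 1), a < b → σ a < σ b)).filter
            (fun σ => σ (Fin.last k') = Fin.last p),
            (∏ jj : Fin (k' + 1), γ (σ jj) ((i : ℕ) - ((jj : ℕ) + 1))) =
            (∏ jj : Fin k', γ (σ (Fin.castSucc jj)) ((i : ℕ) - ((jj : ℕ) + 1))) *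
            γ (Fin.last p) j := by
          intro σ hσ
          simp only [Finset.mem_filter, Finset.mem_univ, true_and] at hσ
          rw [Fin.prod_univ_castSucc, hσ.2]
          congr 1
          have : (i : ℕ) - ((Fin.last k' : ℕ) + 1) = (j : ℕ) := by
            rw [Fin.val_last]; omega
          rw [this]
        rw [Finset.sum_congr rfl step1, ← Finset.sum_mul]
        congr 1
        have hlt2 : ∀ (σ : Fin (k' + 1) → Fin (p + 1)),
            σ ∈ (Finset.univ.filter (fun σ : Fin (k' + 1) → Fin (p + 1) =>
              ∀ a b : Fin (k' + 1), a < b → σ a < σ b)).filter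
              (fun σ => σ (Fin.last k') = Fin.last p) →
            ∀ a : Fin k', (σ (Fin.castSucc a) : ℕ) < p := by
          intro σ hσ a
          simp only [Finset.mem_filter, Finset.mem_univ, true_and] at hσ
          have := hσ.1 (Fin.castSucc a) (Fin.last k') (Fin.castSucc_lt_last a)
          rw [hσ.2] at this
          have := Fin.lt_iff_val_lt_val.mp this
          simpa using this
        refine Finset.sum_bij'
          (fun σ hσ => fun a => (⟨(σ (Fin.castSucc a) : ℕ), hlt2 σ hσ a⟩ : Fin p))
          (fun τ _ => Fin.snoc (fun a => Fin.castSucc (τ a)) (Fin.last p)) ?_ ?_ ?_ ?_ ?_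
        · intro σ hσ
          have hσ' := hσ
          simp only [Finset.mem_filter, Finset.mem_univ, true_and] at hσ' ⊢
          intro a b hab
          exact Fin.lt_iff_val_lt_val.mpr (Fin.lt_iff_val_lt_val.mp
            (hσ'.1 _ _ (Fin.castSucc_lt_castSucc_iff.mpr hab)))
        · intro τ hτ
          simp only [Finset.mem_filter, Finset.mem_univ, true_and] at hτ ⊢
          constructor
          · intro a b hab
            rcases Fin.eq_castSucc_or_eq_last b with ⟨b', rfl⟩ | rfl
            · rcases Fin.eq_castSucc_or_eq_last a with ⟨a', rfl⟩ | rfl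
              · simp only [Fin.snoc_castSucc]
                exact Fin.castSucc_lt_castSucc_iff.mpr
                  (hτ a' b' (Fin.castSucc_lt_castSucc_iff.mp hab))
              · exact absurd hab (by simp [Fin.lt_iff_val_lt_val])
            · rcases Fin.eq_castSucc_or_eq_last a with ⟨a', rfl⟩ | rfl
              · simp only [Fin.snoc_castSucc, Fin.snoc_last]
                exact Fin.castSucc_lt_last _
              · exact absurd hab (lt_irrefl _)
          · exact Fin.snoc_last _ _
        · intro σ hσ
          have hσ' := hσ
          simp only [Finset.mem_filter, Finset.mem_univ, true_and] at hσ'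
          funext c
          rcases Fin.eq_castSucc_or_eq_last c with ⟨c', rfl⟩ | rfl
          · simp only [Fin.snoc_castSucc]
            exact Fin.ext rfl
          · simp only [Fin.snoc_last]
            exact hσ'.2.symm
        · intro τ hτ
          funext a
          apply Fin.ext
          simp [Fin.snoc_castSucc]
        · intro σ hσ
          exact Finset.prod_congr rfl (fun jj _ => by congr 1)
      rw [hS1, hS2, add_comm]


/-- For a product `L = L⁽¹⁾⋯L⁽ᵖ⁾` of `N×N` lower unit bidiagonal
matrices with subdiagonal entries `γ⁽ⁱ⁾ₖ` of `L⁽ⁱ⁾` at position `(k+1,k)`, the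
entries of `L` are `l_{m,m-k} = Σ_{1≤σ₁<⋯<σ_k≤p} Π_{j=1}^{k} γ⁽^{σ_j}⁾_{m-j}`,
for `k = 1,…,p`. -/
theorem stmt4 {R : Type*} [CommRing R] {N p : ℕ}
    (γ : Fin p → ℕ → R)
    (L : Fin p → Matrix (Fin N) (Fin N) R)
    (hL : ∀ (k : Fin p) (i j : Fin N), L k i j =
      if (i : ℕ) = (j : ℕ) then 1
      else if (i : ℕ) = (j : ℕ) + 1 then γ k (j : ℕ) else 0) :
    ∀ (k : ℕ), 1 ≤ k → k ≤ p → ∀ i j : Fin N, (i : ℕ) = (j : ℕ) + k →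
      (List.ofFn L).prod i j =
        ∑ σ ∈ Finset.univ.filter
            (fun σ : Fin k → Fin p => ∀ a b : Fin k, a < b → σ a < σ b),
          ∏ jj : Fin k, γ (σ jj) ((i : ℕ) - ((jj : ℕ) + 1)) :=
  fun k _ _ i j hij => key p γ L hL k i j hij
end

section
/- For every integer p ≥ 2, Σ_{m=1}^{p-1} Σ_{s=1}^{m} ( C(p, m-s+1)·(m-s) + 1 ) = (p/2)·(p + 1 + (p-3)·2^{p-1}). -/
open Finset

lemma sumChooseQ (n : ℕ) : ∑ k ∈ range (n + 1), (n.choose k : ℚ) = 2 ^ n := by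
  exact_mod_cast congrArg (Nat.cast : ℕ → ℚ) (Nat.sum_range_choose n)

lemma sumMulChooseQ (n : ℕ) :
    ∑ k ∈ range (n + 2), (k : ℚ) * ((n + 1).choose k : ℚ) = (n + 1) * 2 ^ n := by
  rw [Finset.sum_range_succ']
  simp only [Nat.cast_zero, zero_mul, add_zero]
  have h : ∀ j ∈ range (n + 1),
      ((j + 1 : ℕ) : ℚ) * (((n + 1).choose (j + 1) : ℕ) : ℚ)
        = ((n : ℚ) + 1) * (n.choose j : ℚ) := by
    intro j _
    have := Nat.add_one_mul_choose_eq n j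
    have : ((n + 1) * n.choose j : ℕ) = ((n + 1).choose (j + 1) * (j + 1) : ℕ) := by
      simpa [Nat.succ_eq_add_one] using this
    have h2 : ((n : ℚ) + 1) * (n.choose j : ℚ)
        = ((n + 1).choose (j + 1) : ℚ) * ((j : ℚ) + 1) := by exact_mod_cast congrArg (Nat.cast : ℕ → ℚ) this
    push_cast
    rw [h2]; ring
  rw [Finset.sum_congr rfl h, ← Finset.mul_sum, sumChooseQ]

lemma sumKm1ChooseQ (n : ℕ) :
    ∑ k ∈ range (n + 2), ((k : ℚ) - 1) * ((n + 1).choose k : ℚ)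
      = (n + 1) * 2 ^ n - 2 ^ (n + 1) := by
  have : ∀ k ∈ range (n + 2), ((k : ℚ) - 1) * ((n + 1).choose k : ℚ)
      = (k : ℚ) * ((n + 1).choose k : ℚ) - ((n + 1).choose k : ℚ) := by
    intro k _; ring
  rw [Finset.sum_congr rfl this, Finset.sum_sub_distrib, sumMulChooseQ, sumChooseQ]

lemma mainSumQ (r : ℕ) :
    ∑ k ∈ range (r + 3), (((r : ℚ) + 2) - k) * ((k : ℚ) - 1) * ((r + 2).choose k : ℚ)
      = ((r : ℚ) + 2) * (((r : ℚ) + 1) * 2 ^ r - 2 ^ (r + 1)) := by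
  rw [Finset.sum_range_succ]
  have hlast : (((r : ℚ) + 2) - ((r + 2 : ℕ) : ℚ)) = 0 := by push_cast; ring
  have htr : ∀ k ∈ range (r + 2),
      (((r : ℚ) + 2) - k) * ((k : ℚ) - 1) * ((r + 2).choose k : ℚ)
        = ((r : ℚ) + 2) * (((k : ℚ) - 1) * ((r + 1).choose k : ℚ)) := by
    intro k hk
    have hk' : k ≤ r + 1 := by simpa [Nat.lt_succ_iff] using Finset.mem_range.mp hk
    have h := Nat.choose_mul_succ_eq (r + 1) k
    have hcast : ((r + 1).choose k : ℚ) * ((r : ℚ) + 2)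
        = ((r + 2).choose k : ℚ) * (((r : ℚ) + 2) - k) := by
      have hsub : ((r + 2 - k : ℕ) : ℚ) = ((r : ℚ) + 2) - k := by
        rw [Nat.cast_sub (by omega)]; push_cast; ring
      have := congrArg (Nat.cast : ℕ → ℚ) h
      push_cast at this
      rw [show ((r:ℚ)+1+1) = (r:ℚ)+2 by ring] at this
      rw [← hsub]
      exact_mod_cast congrArg (Nat.cast : ℕ → ℚ) h
    calc (((r : ℚ) + 2) - k) * ((k : ℚ) - 1) * ((r + 2).choose k : ℚ)
        = ((k : ℚ) - 1) * (((r + 2).choose k : ℚ) * (((r : ℚ) + 2) - k)) := by ring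
      _ = ((k : ℚ) - 1) * (((r + 1).choose k : ℚ) * ((r : ℚ) + 2)) := by rw [← hcast]
      _ = ((r : ℚ) + 2) * (((k : ℚ) - 1) * ((r + 1).choose k : ℚ)) := by ring
  rw [Finset.sum_congr rfl htr, ← Finset.mul_sum, sumKm1ChooseQ]
  rw [hlast]; ring

lemma extendEnds (N : ℕ) (f : ℕ → ℚ) (h0 : f 0 = 0) (htop : f (N + 1) = 0) :
    ∑ k ∈ Finset.Icc 1 N, f k = ∑ k ∈ range (N + 2), f k := by
  rw [Finset.sum_range_succ, htop, add_zero, Finset.sum_range_succ', h0, add_zero,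
    ← Finset.Ico_add_one_right_eq_Icc, Finset.sum_Ico_eq_sum_range]
  simp [add_comm]

/-- For every integer `p ≥ 2`,
`Σ_{m=1}^{p-1} Σ_{s=1}^{m} (C(p, m-s+1)·(m-s) + 1) = (p/2)·(p+1+(p-3)·2^{p-1})`. -/
theorem stmt11 (p : ℕ) (hp : 2 ≤ p) :
    ∑ m ∈ Finset.Icc 1 (p - 1), ∑ s ∈ Finset.Icc 1 m,
        ((p.choose (m - s + 1) : ℚ) * ((m : ℚ) - (s : ℚ)) + 1) =
      ((p : ℚ) / 2) * ((p : ℚ) + 1 + ((p : ℚ) - 3) * 2 ^ (p - 1)) := by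
  obtain ⟨r, rfl⟩ : ∃ r, p = r + 2 := ⟨p - 2, by omega⟩
  -- Step A: reindex inner sum by k = m + 1 - s
  have stepA : ∀ m, ∑ s ∈ Finset.Icc 1 m,
      (((r + 2).choose (m - s + 1) : ℚ) * ((m : ℚ) - (s : ℚ)) + 1)
      = ∑ k ∈ Finset.Icc 1 m, (((r + 2).choose k : ℚ) * ((k : ℚ) - 1) + 1) := by
    intro m
    refine Finset.sum_nbij' (fun s => m + 1 - s) (fun k => m + 1 - k) ?_ ?_ ?_ ?_ ?_
    · intro s hs; simp only [Finset.mem_Icc] at hs ⊢; omega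
    · intro k hk; simp only [Finset.mem_Icc] at hk ⊢; omega
    · intro s hs; simp only [Finset.mem_Icc] at hs; omega
    · intro k hk; simp only [Finset.mem_Icc] at hk; omega
    · intro s hs
      rw [Finset.mem_Icc] at hs
      have h1 : m - s + 1 = m + 1 - s := by omega
      have h2 : ((m + 1 - s : ℕ) : ℚ) = (m : ℚ) + 1 - s := by
        rw [Nat.cast_sub (by omega)]; push_cast; ring
      rw [h1, h2]; ring
  simp only [stepA]
  -- Step C: swap sums
  have stepC : ∑ m ∈ Finset.Icc 1 (r + 2 - 1), ∑ k ∈ Finset.Icc 1 m,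
      (((r + 2).choose k : ℚ) * ((k : ℚ) - 1) + 1)
      = ∑ k ∈ Finset.Icc 1 (r + 1), ∑ _m ∈ Finset.Icc k (r + 1),
      (((r + 2).choose k : ℚ) * ((k : ℚ) - 1) + 1) := by
    rw [show r + 2 - 1 = r + 1 from rfl]
    exact Finset.sum_comm' (by intro m k; simp only [Finset.mem_Icc]; omega)
  rw [stepC]
  have stepD : ∀ k ∈ Finset.Icc 1 (r + 1),
      ∑ _m ∈ Finset.Icc k (r + 1), (((r + 2).choose k : ℚ) * ((k : ℚ) - 1) + 1)
      = (((r : ℚ) + 2) - k) * ((((r + 2).choose k : ℚ) * ((k : ℚ) - 1) + 1)) := by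
    intro k hk
    rw [Finset.mem_Icc] at hk
    rw [Finset.sum_const, Nat.card_Icc, nsmul_eq_mul]
    congr 1
    rw [show r + 1 + 1 - k = r + 2 - k by omega, Nat.cast_sub (by omega)]
    push_cast; ring
  rw [Finset.sum_congr rfl stepD]
  -- Extend sum to range (r+3): ends vanish
  have stepE : ∑ k ∈ Finset.Icc 1 (r + 1),
      (((r : ℚ) + 2) - k) * ((((r + 2).choose k : ℚ) * ((k : ℚ) - 1) + 1))
      = ∑ k ∈ range (r + 3),
      (((r : ℚ) + 2) - k) * ((((r + 2).choose k : ℚ) * ((k : ℚ) - 1) + 1)) := by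
    apply extendEnds
    · norm_num
    · have : ((r : ℚ) + 2) - ((r + 1 + 1 : ℕ) : ℚ) = 0 := by push_cast; ring
      rw [this, zero_mul]
  rw [stepE]
  have split : ∀ k ∈ range (r + 3),
      (((r : ℚ) + 2) - k) * ((((r + 2).choose k : ℚ) * ((k : ℚ) - 1) + 1))
      = (((r : ℚ) + 2) - k) * ((k : ℚ) - 1) * ((r + 2).choose k : ℚ)
        + ((((r : ℚ) + 2)) - k) := by
    intro k _; ring
  rw [Finset.sum_congr rfl split, Finset.sum_add_distrib, mainSumQ]
  have gauss : ∑ k ∈ range (r + 3), (((r : ℚ) + 2) - (k : ℚ))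
      = ((r : ℚ) + 3) * ((r : ℚ) + 2) - ((r : ℚ) + 3) * ((r : ℚ) + 2) / 2 := by
    rw [Finset.sum_sub_distrib, Finset.sum_const, nsmul_eq_mul, Finset.card_range]
    have hn : ((∑ i ∈ range (r + 3), i : ℕ) : ℚ) * 2 = ((r : ℚ) + 3) * ((r : ℚ) + 2) := by
      exact_mod_cast congrArg (fun x : ℕ => (x : ℚ)) (Finset.sum_range_id_mul_two (r + 3))
    have hcast : ∑ i ∈ range (r + 3), (i : ℚ) = ((∑ i ∈ range (r + 3), i : ℕ) : ℚ) := by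
      push_cast; ring
    rw [hcast]
    push_cast
    linarith [hn]
  rw [gauss]
  push_cast
  ring
end
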